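/- Fix n ≥ 1 and let t ↦ x_1(t) < ⋯ < x_n(t) be continuous, and let a_t^{(k)}, b_t^{(ik)} be continuous coefficients with |a_t^{(k)}| ≤ C and |b_t^{(ik)}| ≤ C/n for all i,k,t. Let v(t) ∈ ℝ^n solve the linear ODE ∂_t v_k(t) = (1/n) Σ_{i≠k} (v_i(t) - v_k(t))/(x_i(t) - x_k(t))² + a_t^{(k)} v_k(t) + Σ_i b_t^{(ik)} v_i(t). Then the ℓ¹ norm satisfies ∂_t ‖v(t)‖_1 ≤ 2C ‖v(t)‖_1 at every time where v is differentiable, and consequently ‖v(t)‖_1 ≤ e^{2C(t-s)} ‖v(s)‖_1 for t ≥ s. -/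

import Mathlib

open Real Filter Set Topology

private lemma sign_mul_self_eq_abs (y : ℝ) : Real.sign y * y = |y| := by
  rcases lt_trichotomy y 0 with h | h | h
  · rw [Real.sign_of_neg h, abs_of_neg h]; ring
  · simp [h]
  · rw [Real.sign_of_pos h, abs_of_pos h]; ring

private lemma abs_sign_le_one (y : ℝ) : |Real.sign y| ≤ 1 := by
  rcases lt_trichotomy y 0 with h | h | h
  · simp [Real.sign_of_neg h]
  · simp [h, Real.sign_zero]
  · simp [Real.sign_of_pos h]

/-- Key algebraic dissipativity estimate. -/
private lemma key_bound (n : ℕ) (hn : 1 ≤ n) (C : ℝ) (hC : 0 ≤ C)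
    (xv av : Fin n → ℝ) (bv : Fin n → Fin n → ℝ)
    (ha : ∀ k, |av k| ≤ C) (hb : ∀ i k, |bv i k| ≤ C / n)
    (w s : Fin n → ℝ)
    (hs1 : ∀ k, |s k| ≤ 1)
    (hspos : ∀ k, 0 < w k → s k = 1)
    (hsneg : ∀ k, w k < 0 → s k = -1) :
    ∑ k : Fin n, s k * ((1 / n) * ∑ i ∈ Finset.univ.filter (· ≠ k),
          (w i - w k) / (xv i - xv k)^2
        + av k * w k + ∑ i : Fin n, bv i k * w i)
      ≤ 2 * C * ∑ i : Fin n, |w i| := by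
  have hn0 : (0:ℝ) < n := by exact_mod_cast hn
  set N := ∑ i : Fin n, |w i| with hN
  have hNnn : 0 ≤ N := Finset.sum_nonneg fun i _ => abs_nonneg _
  have hsw : ∀ k, s k * w k = |w k| := by
    intro k
    rcases lt_trichotomy (w k) 0 with h | h | h
    · rw [hsneg k h, abs_of_neg h]; ring
    · simp [h]
    · rw [hspos k h, abs_of_pos h]; ring
  have hsle : ∀ i k, w i < w k → s i ≤ s k := by
    intro i k h
    rcases lt_trichotomy (w i) 0 with hi | hi | hi
    · rw [hsneg i hi]; linarith [(abs_le.1 (hs1 k)).1]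
    · have : 0 < w k := by linarith
      rw [hspos k this]; linarith [(abs_le.1 (hs1 i)).2]
    · have : 0 < w k := by linarith
      rw [hspos k this, hspos i hi]
  have hmono : ∀ i k, 0 ≤ (w i - w k) * (s i - s k) := by
    intro i k
    rcases lt_trichotomy (w i) (w k) with h | h | h
    · have := hsle i k h; nlinarith
    · simp [h]
    · have := hsle k i h; nlinarith
  -- split the sum
  have split : ∑ k : Fin n, s k * ((1 / n) * ∑ i ∈ Finset.univ.filter (· ≠ k),
          (w i - w k) / (xv i - xv k)^2
        + av k * w k + ∑ i : Fin n, bv i k * w i)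
      = (1 / n) * (∑ k : Fin n, s k * ∑ i ∈ Finset.univ.filter (· ≠ k),
          (w i - w k) / (xv i - xv k)^2)
        + (∑ k : Fin n, s k * (av k * w k))
        + ∑ k : Fin n, s k * ∑ i : Fin n, bv i k * w i := by
    rw [Finset.mul_sum]
    rw [← Finset.sum_add_distrib, ← Finset.sum_add_distrib]
    congr 1; funext k; ring
  rw [split]
  -- coupling term
  have hT : (∑ k : Fin n, s k * ∑ i ∈ Finset.univ.filter (· ≠ k),
          (w i - w k) / (xv i - xv k)^2) ≤ 0 := by
    set G : Fin n → Fin n → ℝ := fun k i => s k * ((w i - w k) / (xv i - xv k)^2) with hG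
    have hfull : ∀ k : Fin n, s k * ∑ i ∈ Finset.univ.filter (· ≠ k),
          (w i - w k) / (xv i - xv k)^2 = ∑ i : Fin n, G k i := by
      intro k
      rw [Finset.mul_sum]
      apply Finset.sum_subset (Finset.filter_subset _ _)
      intro i _ hi
      simp only [Finset.mem_filter, Finset.mem_univ, true_and, not_not] at hi
      subst hi
      simp [hG]
    have hTG : (∑ k : Fin n, s k * ∑ i ∈ Finset.univ.filter (· ≠ k),
          (w i - w k) / (xv i - xv k)^2) = ∑ k : Fin n, ∑ i : Fin n, G k i := by
      exact Finset.sum_congr rfl fun k _ => hfull k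
    rw [hTG]
    have hswap : (∑ k : Fin n, ∑ i : Fin n, G k i) = ∑ k : Fin n, ∑ i : Fin n, G i k :=
      Finset.sum_comm
    have hpair : ∀ k i : Fin n, G k i + G i k ≤ 0 := by
      intro k i
      have hd : (xv k - xv i)^2 = (xv i - xv k)^2 := by ring
      have : G k i + G i k
          = (s k * (w i - w k) + s i * (w k - w i)) / (xv i - xv k)^2 := by
        simp only [hG, hd, ← mul_div_assoc]
        rw [← add_div]
      rw [this]
      apply div_nonpos_of_nonpos_of_nonneg _ (sq_nonneg _)
      nlinarith [hmono i k]
    have h2 : (∑ k : Fin n, ∑ i : Fin n, G k i) + (∑ k : Fin n, ∑ i : Fin n, G k i) ≤ 0 := by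
      nth_rewrite 2 [hswap]
      rw [← Finset.sum_add_distrib]
      apply Finset.sum_nonpos
      intro k _
      rw [← Finset.sum_add_distrib]
      exact Finset.sum_nonpos fun i _ => hpair k i
    linarith
  have h1 : (1 / (n:ℝ)) * (∑ k : Fin n, s k * ∑ i ∈ Finset.univ.filter (· ≠ k),
          (w i - w k) / (xv i - xv k)^2) ≤ 0 :=
    mul_nonpos_of_nonneg_of_nonpos (by positivity) hT
  have h2 : (∑ k : Fin n, s k * (av k * w k)) ≤ C * N := by
    rw [hN, Finset.mul_sum]
    apply Finset.sum_le_sum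
    intro k _
    have : s k * (av k * w k) = av k * |w k| := by rw [← hsw k]; ring
    rw [this]
    calc av k * |w k| ≤ |av k| * |w k| :=
          mul_le_mul_of_nonneg_right (le_abs_self _) (abs_nonneg _)
      _ ≤ C * |w k| := mul_le_mul_of_nonneg_right (ha k) (abs_nonneg _)
  have h3 : (∑ k : Fin n, s k * ∑ i : Fin n, bv i k * w i) ≤ C * N := by
    have hterm : ∀ k : Fin n, s k * ∑ i : Fin n, bv i k * w i ≤ (C / n) * N := by
      intro k
      rw [Finset.mul_sum]
      have : (C / (n:ℝ)) * N = ∑ i : Fin n, (C / n) * |w i| := by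
        rw [hN, Finset.mul_sum]
      rw [this]
      apply Finset.sum_le_sum
      intro i _
      calc s k * (bv i k * w i) ≤ |s k * (bv i k * w i)| := le_abs_self _
        _ = |s k| * (|bv i k| * |w i|) := by rw [abs_mul, abs_mul]
        _ ≤ 1 * ((C / n) * |w i|) := by
            apply mul_le_mul (hs1 k) _ (by positivity) zero_le_one
            exact mul_le_mul_of_nonneg_right (hb i k) (abs_nonneg _)
        _ = (C / n) * |w i| := one_mul _
    calc (∑ k : Fin n, s k * ∑ i : Fin n, bv i k * w i)
        ≤ ∑ _k : Fin n, (C / n) * N := Finset.sum_le_sum fun k _ => hterm k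
      _ = n * ((C / n) * N) := by
          rw [Finset.sum_const, Finset.card_univ, Fintype.card_fin, nsmul_eq_mul]
      _ = C * N := by field_simp
  linarith

theorem stmt_15 (n : ℕ) (hn : 1 ≤ n) (C : ℝ) (hC : 0 ≤ C)
    (x : ℝ → Fin n → ℝ) (hx_cont : Continuous x)
    (hx_mono : ∀ t, StrictMono (x t))
    (a : ℝ → Fin n → ℝ) (b : ℝ → Fin n → Fin n → ℝ)
    (ha_cont : Continuous a) (hb_cont : Continuous b)
    (ha : ∀ t k, |a t k| ≤ C) (hb : ∀ t i k, |b t i k| ≤ C / n)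
    (v : ℝ → Fin n → ℝ)
    (hv : ∀ t k, HasDerivAt (fun s => v s k)
      ((1 / n) * ∑ i ∈ Finset.univ.filter (· ≠ k),
          (v t i - v t k) / (x t i - x t k)^2
        + a t k * v t k + ∑ i : Fin n, b t i k * v t i) t) :
    (∀ τ : ℝ, DifferentiableAt ℝ (fun t => ∑ i : Fin n, |v t i|) τ →
      deriv (fun t => ∑ i : Fin n, |v t i|) τ ≤ 2 * C * ∑ i : Fin n, |v τ i|) ∧
    (∀ s t : ℝ, s ≤ t →
      ∑ i : Fin n, |v t i| ≤ Real.exp (2 * C * (t - s)) * ∑ i : Fin n, |v s i|) := by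
  -- notation for the derivative value
  set D : ℝ → Fin n → ℝ := fun t k =>
    (1 / n) * ∑ i ∈ Finset.univ.filter (· ≠ k),
          (v t i - v t k) / (x t i - x t k)^2
        + a t k * v t k + ∑ i : Fin n, b t i k * v t i with hD
  set N : ℝ → ℝ := fun t => ∑ i : Fin n, |v t i| with hNdef
  have hvc : ∀ k, Continuous (fun t => v t k) := by
    intro k
    have : Differentiable ℝ (fun t => v t k) := fun t => (hv t k).differentiableAt
    exact this.continuous
  have hNc : Continuous N := by
    apply continuous_finset_sum
    intro i _
    exact (hvc i).abs
  constructor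
  · -- part 1
    intro τ hdiff
    set s : Fin n → ℝ := fun k => Real.sign (v τ k) with hs
    have hg : HasDerivAt (fun t => ∑ k : Fin n, s k * v t k)
        (∑ k : Fin n, s k * D τ k) τ := by
      apply HasDerivAt.fun_sum
      intro k _
      exact (hv τ k).const_mul (s k)
    have hge : ∀ t, (∑ k : Fin n, s k * v t k) ≤ N t := by
      intro t
      apply Finset.sum_le_sum
      intro k _
      calc s k * v t k ≤ |s k * v t k| := le_abs_self _
        _ = |s k| * |v t k| := abs_mul _ _
        _ ≤ 1 * |v t k| := mul_le_mul_of_nonneg_right (abs_sign_le_one _) (abs_nonneg _)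
        _ = |v t k| := one_mul _
    have hgeq : (∑ k : Fin n, s k * v τ k) = N τ :=
      Finset.sum_congr rfl fun k _ => sign_mul_self_eq_abs (v τ k)
    have hmin : IsLocalMin (fun t => N t - ∑ k : Fin n, s k * v t k) τ :=
      Filter.Eventually.of_forall fun t => by
        simp only
        linarith [hge t, hgeq]
    have hdg : DifferentiableAt ℝ (fun t => ∑ k : Fin n, s k * v t k) τ :=
      hg.differentiableAt
    have hdsub : deriv (fun t => N t - ∑ k : Fin n, s k * v t k) τ = 0 :=
      hmin.deriv_eq_zero
    rw [deriv_fun_sub hdiff hdg] at hdsub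
    have : deriv N τ = ∑ k : Fin n, s k * D τ k := by
      rw [hg.deriv] at hdsub; linarith
    rw [hNdef] at this ⊢
    rw [this]
    exact key_bound n hn C hC (x τ) (a τ) (b τ) (ha τ) (hb τ) (v τ) s
      (fun k => abs_sign_le_one _)
      (fun k hk => Real.sign_of_pos hk)
      (fun k hk => Real.sign_of_neg hk)
  · -- part 2
    intro s t hst
    -- the right-derivative candidate
    set σ : ℝ → Fin n → ℝ := fun t k =>
      if v t k = 0 then Real.sign (D t k) else Real.sign (v t k) with hσ
    set f' : ℝ → ℝ := fun t => ∑ k : Fin n, σ t k * D t k with hf'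
    -- slope convergence from the right
    have hslope : ∀ u : ℝ, Tendsto (fun z => (z - u)⁻¹ * (N z - N u)) (𝓝[>] u) (𝓝 (f' u)) := by
      intro u
      have hcomp : ∀ k : Fin n,
          Tendsto (fun z => (z - u)⁻¹ * (|v z k| - |v u k|)) (𝓝[>] u) (𝓝 (σ u k * D u k)) := by
        intro k
        by_cases h0 : v u k = 0
        · -- slope = |slope of v|
          have hvslope : Tendsto (slope (fun z => v z k) u) (𝓝[≠] u) (𝓝 (D u k)) :=
            hasDerivAt_iff_tendsto_slope.1 (hv u k)
          have habs : Tendsto (fun z => |slope (fun z => v z k) u z|) (𝓝[>] u)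
              (𝓝 |D u k|) := by
            apply (continuous_abs.tendsto _).comp
            exact hvslope.mono_left (nhdsWithin_mono _ (fun z hz => ne_of_gt hz))
          have heq : ∀ z ∈ Ioi u, |slope (fun z => v z k) u z|
              = (z - u)⁻¹ * (|v z k| - |v u k|) := by
            intro z hz
            have hz' : 0 < z - u := sub_pos.2 hz
            rw [slope_def_field, div_eq_inv_mul, abs_mul, abs_inv,
              abs_of_pos hz', h0, abs_zero, sub_zero, sub_zero]
          have hσval : σ u k * D u k = |D u k| := by
            simp only [hσ]; simp only [h0, if_pos rfl]
            exact sign_mul_self_eq_abs _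
          rw [hσval]
          apply habs.congr'
          filter_upwards [self_mem_nhdsWithin] with z hz
          exact heq z hz
        · -- v u k ≠ 0 : |v · k| differentiable at u
          have hσval : σ u k = Real.sign (v u k) := by simp only [hσ]; simp [h0]
          have habs : HasDerivAt (fun z => |v z k|) (Real.sign (v u k) * D u k) u := by
            rcases Ne.lt_or_gt h0 with hneg | hpos
            · have hev : ∀ᶠ z in 𝓝 u, |v z k| = -(v z k) := by
                have : ∀ᶠ z in 𝓝 u, v z k < 0 :=
                  (hvc k).continuousAt.eventually_lt continuousAt_const hneg
                filter_upwards [this] with z hz using abs_of_neg hz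
              have : HasDerivAt (fun z => -(v z k)) (-(D u k)) u := (hv u k).neg
              have := this.congr_of_eventuallyEq (by filter_upwards [hev] with z hz using hz)
              rwa [Real.sign_of_neg hneg, neg_one_mul]
            · have hev : ∀ᶠ z in 𝓝 u, |v z k| = v z k := by
                have : ∀ᶠ z in 𝓝 u, 0 < v z k :=
                  continuousAt_const.eventually_lt (hvc k).continuousAt hpos
                filter_upwards [this] with z hz using abs_of_pos hz
              have := (hv u k).congr_of_eventuallyEq
                (by filter_upwards [hev] with z hz using hz)
              rwa [Real.sign_of_pos hpos, one_mul]
          rw [hσval]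
          have := hasDerivAt_iff_tendsto_slope.1 habs
          have h2 := this.mono_left (nhdsWithin_mono u (fun z hz => ne_of_gt hz) :
            𝓝[>] u ≤ 𝓝[≠] u)
          apply h2.congr'
          filter_upwards [self_mem_nhdsWithin] with z hz
          rw [slope_def_field, div_eq_inv_mul]
      have hsum := tendsto_finset_sum Finset.univ (fun k _ => hcomp k)
      rw [hf']
      apply hsum.congr'
      filter_upwards [self_mem_nhdsWithin] with z _
      rw [hNdef]
      simp only
      rw [← Finset.sum_sub_distrib, ← Finset.mul_sum]
    -- the pointwise bound
    have hbound : ∀ u : ℝ, f' u ≤ 2 * C * N u := by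
      intro u
      rw [hf', hNdef]
      apply key_bound n hn C hC (x u) (a u) (b u) (ha u) (hb u) (v u) (σ u)
      · intro k; simp only [hσ]; split <;> exact abs_sign_le_one _
      · intro k hk; simp only [hσ]; simp [ne_of_gt hk, Real.sign_of_pos hk]
      · intro k hk; simp only [hσ]; simp [ne_of_lt hk, Real.sign_of_neg hk]
    have := le_gronwallBound_of_liminf_deriv_right_le (f := N) (f' := f')
      (δ := N s) (K := 2 * C) (ε := 0) (a := s) (b := t)
      (hNc.continuousOn)
      (fun u _ r hr => ((hslope u).eventually_lt_const hr).frequently)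
      le_rfl
      (fun u _ => by rw [add_zero]; exact hbound u)
      t (right_mem_Icc.2 hst)
    rw [gronwallBound_ε0] at this
    rw [hNdef] at this
    simpa [mul_comm] using this
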